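/- arXiv:2605.13473 — 2 statements merged into one kernel-verified Lean document; each statement's English description precedes it below -/
import Mathlib

section
/- Token-local contraction bound: assume ‖k_t‖ = 1 for all t = 1, ..., T, and let q_t = (1 − β_t⟨d_t, s_t⟩)² where s_t = k_t^{⊙2}. Suppose the online learner's iterates d_t satisfy the regret bound ∑_{t=1}^T (h_t(d_t) − h_t(d)) ≤ R for some fixed d, where h_t(d) = ((1 − β_t⟨d, s_t⟩)² − 1)/2. Then ∏_{t=1}^T q_t ≤ (2ε(d) + 2R/T)^T, where ε(d) = (1/(2T)) ∑_{t=1}^T (1 − β_t⟨d, s_t⟩)². -/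
/-- Token-local residual contraction bound: with unit keys, `s_t = k_t^{⊙2}`,
`q_t = (1 − β_t⟨d_t, s_t⟩)²`, `h_t(d) = ((1 − β_t⟨d, s_t⟩)² − 1)/2`, and
regret `∑_t (h_t(d_t) − h_t(d)) ≤ R` against a fixed comparator `d`, one has
`∏_t q_t ≤ (2ε(d) + 2R/T)^T` where `ε(d) = (1/(2T)) ∑_t (1 − β_t⟨d, s_t⟩)²`. -/
theorem stmt_14 (K T : ℕ) (hT : 0 < T)
    (k : Fin T → Fin K → ℝ) (hk : ∀ t, ∑ i, k t i ^ 2 = 1)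
    (β : Fin T → ℝ) (dseq : Fin T → Fin K → ℝ) (d : Fin K → ℝ)
    (s : Fin T → Fin K → ℝ) (hs : ∀ t i, s t i = k t i ^ 2)
    (h : Fin T → (Fin K → ℝ) → ℝ)
    (hh : ∀ t (d' : Fin K → ℝ),
      h t d' = ((1 - β t * ∑ i, d' i * s t i) ^ 2 - 1) / 2)
    (q : Fin T → ℝ)
    (hq : ∀ t, q t = (1 - β t * ∑ i, dseq t i * s t i) ^ 2)
    (R : ℝ) (hreg : ∑ t, (h t (dseq t) - h t d) ≤ R)
    (ε : ℝ)
    (hε : ε = (1 / (2 * (T : ℝ))) * ∑ t, (1 - β t * ∑ i, d i * s t i) ^ 2) :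
    ∏ t, q t ≤ (2 * ε + 2 * R / (T : ℝ)) ^ T := by
  have hTR : (0:ℝ) < (T:ℝ) := by exact_mod_cast hT
  have hq0 : ∀ t, 0 ≤ q t := fun t => by rw [hq]; positivity
  -- sum of q
  have hsumq : ∑ t, q t = 2 * ∑ t, h t (dseq t) + T := by
    have : ∀ t : Fin T, q t = 2 * h t (dseq t) + 1 := by
      intro t; rw [hq, hh]; ring
    rw [Finset.sum_congr rfl fun t _ => this t, Finset.sum_add_distrib,
      Finset.sum_const, ← Finset.mul_sum]
    simp
  have hsumd : ∑ t, h t d = (T:ℝ) * ε - (T:ℝ) / 2 := by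
    have : ∑ t, h t d = ((∑ t, (1 - β t * ∑ i, d i * s t i) ^ 2) - T) / 2 := by
      rw [Finset.sum_congr rfl fun t _ => hh t d, ← Finset.sum_div,
        Finset.sum_sub_distrib, Finset.sum_const]
      simp
    rw [this, hε]
    field_simp
  have hsum_le : ∑ t, q t ≤ 2 * (T:ℝ) * ε + 2 * R := by
    have h1 : ∑ t, h t (dseq t) ≤ R + ∑ t, h t d := by
      have := hreg
      rw [Finset.sum_sub_distrib] at this
      linarith
    rw [hsumq]
    rw [hsumd] at h1
    linarith
  -- AM-GM
  have hAM : (∏ t, q t) ^ ((T:ℝ)⁻¹) ≤ (∑ t, q t) / T := by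
    have := Real.geom_mean_le_arith_mean_weighted Finset.univ (fun _ : Fin T => (T:ℝ)⁻¹) q
      (fun _ _ => by positivity)
      (by simp [Finset.sum_const]; field_simp)
      (fun t _ => hq0 t)
    calc (∏ t, q t) ^ ((T:ℝ)⁻¹) = ∏ t, q t ^ ((T:ℝ)⁻¹) := by
          rw [← Real.finset_prod_rpow _ _ (fun t _ => hq0 t)]
      _ ≤ ∑ t, (T:ℝ)⁻¹ * q t := this
      _ = (∑ t, q t) / T := by rw [← Finset.mul_sum]; ring
  have hP0 : 0 ≤ ∏ t, q t := Finset.prod_nonneg fun t _ => hq0 t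
  have key : ∏ t, q t = ((∏ t, q t) ^ ((T:ℝ)⁻¹)) ^ T := by
    rw [← Real.rpow_natCast ((∏ t, q t) ^ ((T:ℝ)⁻¹)) T, ← Real.rpow_mul hP0,
      inv_mul_cancel₀ (ne_of_gt hTR), Real.rpow_one]
  rw [key]
  have h2 : (∑ t, q t) / T ≤ 2 * ε + 2 * R / T := by
    rw [div_le_iff₀ hTR]
    have : (2 * ε + 2 * R / (T:ℝ)) * (T:ℝ) = 2 * (T:ℝ) * ε + 2 * R := by
      field_simp
    rw [this]; exact hsum_le
  calc ((∏ t, q t) ^ ((T:ℝ)⁻¹)) ^ T ≤ ((∑ t, q t) / T) ^ T :=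
        pow_le_pow_left₀ (Real.rpow_nonneg hP0 _) hAM T
    _ ≤ (2 * ε + 2 * R / T) ^ T :=
        pow_le_pow_left₀ (div_nonneg (Finset.sum_nonneg fun t _ => hq0 t) hTR.le) h2 T
end

section
/- Exact Newton comparator case: under the hypotheses of the token-local contraction bound, if additionally there exists d* with β_t⟨d*, s_t⟩ = 1 for all t (so ε(d*) = 0) and the regret bound holds against d*, then ∏_{t=1}^T q_t ≤ (2R/T)^T. -/
/-- Exact Newton comparator case: if moreover `β_t⟨d*, s_t⟩ = 1` for all `t`
(so `ε(d*) = 0`) and the regret bound holds against `d*`, then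
`∏_t q_t ≤ (2R/T)^T`. -/
theorem stmt_15 (K T : ℕ) (hT : 0 < T)
    (k : Fin T → Fin K → ℝ) (hk : ∀ t, ∑ i, k t i ^ 2 = 1)
    (β : Fin T → ℝ) (dseq : Fin T → Fin K → ℝ) (dstar : Fin K → ℝ)
    (s : Fin T → Fin K → ℝ) (hs : ∀ t i, s t i = k t i ^ 2)
    (hstar : ∀ t, β t * ∑ i, dstar i * s t i = 1)
    (h : Fin T → (Fin K → ℝ) → ℝ)
    (hh : ∀ t (d' : Fin K → ℝ),
      h t d' = ((1 - β t * ∑ i, d' i * s t i) ^ 2 - 1) / 2)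
    (q : Fin T → ℝ)
    (hq : ∀ t, q t = (1 - β t * ∑ i, dseq t i * s t i) ^ 2)
    (R : ℝ) (hreg : ∑ t, (h t (dseq t) - h t dstar) ≤ R) :
    ∏ t, q t ≤ (2 * R / (T : ℝ)) ^ T := by
  have hTpos : (0:ℝ) < T := by exact_mod_cast hT
  have hq0 : ∀ t, 0 ≤ q t := fun t => (hq t) ▸ sq_nonneg _
  -- ∑ q t ≤ 2R
  have hsum : ∑ t, q t ≤ 2 * R := by
    have : ∑ t, (h t (dseq t) - h t dstar) = ∑ t, q t / 2 := by
      refine Finset.sum_congr rfl fun t _ => ?_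
      rw [hh, hh, hstar, hq]
      ring
    rw [this] at hreg
    rw [← Finset.sum_div] at hreg
    linarith
  have key := Real.geom_mean_le_arith_mean_weighted Finset.univ
      (fun _ : Fin T => 1 / (T : ℝ)) q
      (fun i _ => by positivity)
      (by simp [Finset.card_univ, mul_comm]; field_simp)
      (fun i _ => hq0 i)
  have hmean : ∑ t, (1 / (T:ℝ)) * q t ≤ 2 * R / T := by
    rw [← Finset.mul_sum, one_div, div_eq_mul_inv, mul_comm (2*R)]
    exact mul_le_mul_of_nonneg_left hsum (by positivity)
  have key2 : ∏ t, q t ^ ((1:ℝ)/T) ≤ 2 * R / T := le_trans key hmean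
  have hleft : (∏ t, q t ^ ((1:ℝ)/T)) ^ (T:ℕ) = ∏ t, q t := by
    rw [← Finset.prod_pow]
    refine Finset.prod_congr rfl fun t _ => ?_
    rw [← Real.rpow_natCast (q t ^ ((1:ℝ)/T)) T, ← Real.rpow_mul (hq0 t), one_div,
      inv_mul_cancel₀ (ne_of_gt hTpos), Real.rpow_one]
  calc ∏ t, q t = (∏ t, q t ^ ((1:ℝ)/T)) ^ (T:ℕ) := hleft.symm
    _ ≤ (2 * R / T) ^ T := by
        apply pow_le_pow_left₀ _ key2
        exact Finset.prod_nonneg fun t _ => Real.rpow_nonneg (hq0 t) _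
end
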